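/- Let A ∈ SU(5) with entries a_{ij}, and define ν(A) = a_{43}a_{51} + a_{44}a_{52} − a_{41}a_{53} − a_{42}a_{54}. For any matrix M = [[a, b],[−conj(b)z, conj(a)z]] ∈ U(2) with z ∈ S¹ and |a|² + |b|² = 1, acting on the last two rows of A by left multiplication (rows 4 and 5), we have ν(MA) = z·ν(A). In particular |ν(MA)| = |ν(A)|. -/

import Mathlib

/-- `ν(A) = a₄₃a₅₁ + a₄₄a₅₂ − a₄₁a₅₃ − a₄₂a₅₄` (rows and columns indexed from 0). -/
def nu (A : Matrix (Fin 5) (Fin 5) ℂ) : ℂ :=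
  A 3 2 * A 4 0 + A 3 3 * A 4 1 - A 3 0 * A 4 2 - A 3 1 * A 4 3

theorem stmt_7 (A B : Matrix (Fin 5) (Fin 5) ℂ)
    (hA : A ∈ Matrix.specialUnitaryGroup (Fin 5) ℂ)
    (a b z : ℂ) (hz : ‖z‖ = 1) (hab : ‖a‖ ^ 2 + ‖b‖ ^ 2 = 1)
    (hB4 : ∀ j, B 3 j = a * A 3 j + b * A 4 j)
    (hB5 : ∀ j, B 4 j = -(starRingEnd ℂ) b * z * A 3 j + (starRingEnd ℂ) a * z * A 4 j)
    (hBrest : ∀ i, i ≠ 3 → i ≠ 4 → ∀ j, B i j = A i j) :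
    nu B = z * nu A ∧ ‖nu B‖ = ‖nu A‖ := by
  have key : a * (starRingEnd ℂ) a + b * (starRingEnd ℂ) b = 1 := by
    rw [Complex.mul_conj, Complex.mul_conj, Complex.normSq_eq_norm_sq, Complex.normSq_eq_norm_sq]
    exact_mod_cast hab
  have h1 : nu B = z * nu A := by
    simp only [nu, hB4, hB5]
    ring_nf
    linear_combination (z * (A 3 2 * A 4 0 + A 3 3 * A 4 1 - A 3 0 * A 4 2 - A 3 1 * A 4 3)) * key
  refine ⟨h1, ?_⟩
  rw [h1, norm_mul, hz, one_mul]
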